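/- Let p, q, T be positive integers, let X_1, …, X_T be real p×q matrices, let α ≥ −1 be a real number, set α̃ = √(1+α) − 1, X̄ = (1/T)∑_{t=1}^T X_t, and X*_t = X_t + α̃ X̄. Then (1/(pqT)) ∑_{t=1}^T (X*_t)ᵀ X*_t = (1/(pq)) [ (1+α) · X̄ᵀ X̄ + (1/T) ∑_{t=1}^T (X_t − X̄)ᵀ(X_t − X̄) ]. That is, the α-PCA column statistic M̂_C defined from the moment aggregation equals the second-moment matrix of the transposed transformed data. -/

import Mathlib

open Matrix

/-- The α-PCA column statistic `M̂_C` defined by moment aggregation equals the second-moment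
matrix of the transposed transformed data `X*_t = X_t + (√(1+α) − 1) X̄`. -/
theorem stmt_4 (p q T : ℕ) (hp : 0 < p) (hq : 0 < q) (hT : 0 < T)
    (X : Fin T → Matrix (Fin p) (Fin q) ℝ)
    (α : ℝ) (hα : -1 ≤ α)
    (αtilde : ℝ) (hαtilde : αtilde = Real.sqrt (1 + α) - 1)
    (Xbar : Matrix (Fin p) (Fin q) ℝ) (hXbar : Xbar = (T : ℝ)⁻¹ • ∑ t, X t)
    (Xstar : Fin T → Matrix (Fin p) (Fin q) ℝ)
    (hXstar : ∀ t, Xstar t = X t + αtilde • Xbar) :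
    ((p : ℝ) * q * T)⁻¹ • ∑ t, (Xstar t)ᵀ * Xstar t
      = ((p : ℝ) * q)⁻¹ •
          ((1 + α) • (Xbarᵀ * Xbar) + (T : ℝ)⁻¹ • ∑ t, (X t - Xbar)ᵀ * (X t - Xbar)) := by
  have hT' : (T : ℝ) ≠ 0 := Nat.cast_ne_zero.mpr hT.ne'
  have hp' : (p : ℝ) ≠ 0 := Nat.cast_ne_zero.mpr hp.ne'
  have hq' : (q : ℝ) ≠ 0 := Nat.cast_ne_zero.mpr hq.ne'
  have h1 : (0:ℝ) ≤ 1 + α := by linarith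
  have hα2 : αtilde ^ 2 + 2 * αtilde = α := by
    have hs := Real.sq_sqrt h1
    rw [hαtilde]; nlinarith [hs]
  have hsum : ∑ t, X t = (T : ℝ) • Xbar := by
    rw [hXbar, smul_smul, mul_inv_cancel₀ hT', one_smul]
  set S := ∑ t, (X t)ᵀ * X t with hS
  set M := Xbarᵀ * Xbar with hM
  have hA : ∑ t, (X t)ᵀ * Xbar = (T : ℝ) • M := by
    rw [← Matrix.sum_mul, ← transpose_sum, hsum, transpose_smul, Matrix.smul_mul]
  have hB : ∑ t, Xbarᵀ * X t = (T : ℝ) • M := by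
    rw [← Matrix.mul_sum, hsum, Matrix.mul_smul]
  have hL : ∑ t, (Xstar t)ᵀ * Xstar t
      = S + αtilde • ((T : ℝ) • M) + αtilde • ((T : ℝ) • M)
        + (T : ℝ) • (αtilde ^ 2 • M) := by
    have : ∀ t, (Xstar t)ᵀ * Xstar t
        = (X t)ᵀ * X t + αtilde • ((X t)ᵀ * Xbar) + αtilde • (Xbarᵀ * X t)
          + αtilde ^ 2 • M := by
      intro t
      rw [hXstar t]
      simp only [transpose_add, transpose_smul, Matrix.add_mul, Matrix.mul_add,
        Matrix.smul_mul, Matrix.mul_smul, smul_smul, smul_add, hM, pow_two]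
      abel
    rw [Finset.sum_congr rfl (fun t _ => this t), Finset.sum_add_distrib,
      Finset.sum_add_distrib, Finset.sum_add_distrib, ← Finset.smul_sum, ← Finset.smul_sum,
      hA, hB, Finset.sum_const, Finset.card_univ, Fintype.card_fin, ← Nat.cast_smul_eq_nsmul ℝ]
  have hR : ∑ t, (X t - Xbar)ᵀ * (X t - Xbar)
      = S - (T : ℝ) • M - (T : ℝ) • M + (T : ℝ) • M := by
    have : ∀ t, (X t - Xbar)ᵀ * (X t - Xbar)
        = (X t)ᵀ * X t - (X t)ᵀ * Xbar - Xbarᵀ * X t + M := by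
      intro t
      simp only [transpose_sub, Matrix.sub_mul, Matrix.mul_sub, hM]
      abel
    rw [Finset.sum_congr rfl (fun t _ => this t), Finset.sum_add_distrib,
      Finset.sum_sub_distrib, Finset.sum_sub_distrib, hA, hB, Finset.sum_const,
      Finset.card_univ, Fintype.card_fin, ← Nat.cast_smul_eq_nsmul ℝ]
  rw [hL, hR]
  match_scalars <;> field_simp <;> linear_combination hα2
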